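/- arXiv:2010.15944 — 8 statements merged into one kernel-verified Lean document; each statement's English description precedes it below -/
import Mathlib

section
/- In any ccpBa, ¬∼a ≤ ∼¬a for all a. -/
/-- In any ccpBa, `¬∼a ≤ ∼¬a`. -/
theorem ccpBa_neg_snot_le_snot_neg {A : Type*} [HeytingAlgebra A] (d : A) (hd : dᶜᶜ = d)
    (a : A) : (a ⇨ d)ᶜ ≤ aᶜ ⇨ d := by
  rw [le_himp_iff]
  have h1 : aᶜ ≤ a ⇨ d := le_himp_iff.2 (by simp)
  have h2 : (a ⇨ d)ᶜ ≤ aᶜᶜ := compl_le_compl h1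
  calc (a ⇨ d)ᶜ ⊓ aᶜ ≤ aᶜᶜ ⊓ aᶜ := inf_le_inf_right _ h2
    _ = ⊥ := by simp [inf_comm]
    _ ≤ d := bot_le
end

section
/- In any ccpBa, ¬∼¬a ≤ ¬a for all a. -/
/-- In any ccpBa, `¬∼¬a ≤ ¬a`. -/
theorem ccpBa_neg_snot_neg_le_neg {A : Type*} [HeytingAlgebra A] (d : A) (hd : dᶜᶜ = d)
    (a : A) : (aᶜ ⇨ d)ᶜ ≤ aᶜ := by
  have h : aᶜᶜ ≤ aᶜ ⇨ d := le_himp_iff.2 (by simp)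
  calc (aᶜ ⇨ d)ᶜ ≤ aᶜᶜᶜ := compl_le_compl h
    _ = aᶜ := compl_compl_compl a
end

section
/- Let A be a Heyting algebra with ¬x := x → 0 and let d ∈ A with ∼a := a → d. Then the condition ¬¬d = d holds if and only if ∼∼(d → a) = 1 for all a ∈ A. -/
/-- `¬¬d = d` iff `∼∼(d → a) = 1` for all `a`, where `∼x := x ⇨ d`. -/
theorem ccpBa_iff_peirce {A : Type*} [HeytingAlgebra A] (d : A) :
    dᶜᶜ = d ↔ ∀ a : A, ((d ⇨ a) ⇨ d) ⇨ d = ⊤ := by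
  constructor
  · intro h a
    rw [himp_eq_top_iff]
    have h1 : dᶜ ≤ d ⇨ a := by
      rw [le_himp_iff]
      exact le_trans (by simp) bot_le
    have h2 : (d ⇨ a) ⇨ d ≤ dᶜ ⇨ d := himp_le_himp_right h1
    have h3 : dᶜ ⇨ d ≤ dᶜᶜ := by
      rw [le_compl_iff_disjoint_right, disjoint_iff_inf_le, inf_comm]
      calc dᶜ ⊓ (dᶜ ⇨ d) = dᶜ ⊓ d := inf_himp _ _
        _ ≤ ⊥ := by simp [inf_comm, inf_compl_eq_bot]
    exact h2.trans (h3.trans_eq h)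
  · intro h
    refine le_antisymm ?_ le_compl_compl
    have := h ⊥
    rw [himp_eq_top_iff] at this
    have h4 : dᶜᶜ ≤ (d ⇨ ⊥) ⇨ d := by
      rw [le_himp_iff, himp_bot]
      exact (le_compl_iff_disjoint_right.mp le_rfl).le_bot.trans bot_le
    exact h4.trans this
end

section
/- Let H be a Heyting algebra and fix u = (u₁,u₂) with u₁ ≤ u₂ in H. Let A_u := {(a₁,a₂) : a₁ ≤ a₂ ≤ u₂ and a₁ = a₂ ∧ u₁}, with operations (a₁,a₂) ⊔ (b₁,b₂) := (a₁∨b₁, a₂∨b₂) and (a₁,a₂) ⊓ (b₁,b₂) := (a₁∧b₁, a₂∧b₂), implication (a₁,a₂) → (b₁,b₂) := ((a₁→b₁)∧u₁, (a₂→b₂)∧u₂), and ∼(a₁,a₂) := (u₁ ∧ ¬a₁, u₂ ∧ ¬a₁). Then A_u with top (u₁,u₂) and bottom (0,0) forms a ccpBa, i.e., the implication is a relative pseudo-complement, ¬¬∼⊤ = ∼⊤ where ¬x := x → (0,0), and ∼x = x → ∼⊤ for all x ∈ A_u. -/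
private lemma aux_imp {H : Type*} [HeytingAlgebra H] (a b u : H) :
    ((a ⊓ u) ⇨ (b ⊓ u)) ⊓ u = (a ⇨ b) ⊓ u := by
  apply le_antisymm
  · refine le_inf ?_ inf_le_right
    rw [le_himp_iff]
    calc ((a ⊓ u) ⇨ (b ⊓ u)) ⊓ u ⊓ a = ((a ⊓ u) ⇨ (b ⊓ u)) ⊓ (a ⊓ u) := by
          rw [inf_assoc, inf_comm u a]
      _ ≤ b ⊓ u := himp_inf_le
      _ ≤ b := inf_le_left
  · refine le_inf ?_ inf_le_right
    rw [le_himp_iff]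
    calc (a ⇨ b) ⊓ u ⊓ (a ⊓ u) = ((a ⇨ b) ⊓ a) ⊓ (u ⊓ u) := by ac_rfl
      _ = ((a ⇨ b) ⊓ a) ⊓ u := by rw [inf_idem]
      _ ≤ b ⊓ u := inf_le_inf_right u himp_inf_le

private lemma aux_dn {H : Type*} [HeytingAlgebra H] (u₁ u₂ : H) (hu : u₁ ≤ u₂) :
    ((u₂ ⊓ u₁ᶜ)ᶜ ⊓ u₂)ᶜ ⊓ u₂ = u₂ ⊓ u₁ᶜ := by
  apply le_antisymm
  · refine le_inf inf_le_right (inf_le_left.trans (compl_anti (le_inf ?_ hu)))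
    rw [le_compl_iff_disjoint_right, disjoint_iff]
    calc u₁ ⊓ (u₂ ⊓ u₁ᶜ) = (u₁ ⊓ u₁ᶜ) ⊓ u₂ := by ac_rfl
      _ = ⊥ := by simp
  · refine le_inf ?_ inf_le_left
    exact le_compl_compl.trans (compl_anti inf_le_left)

private lemma aux_sn {H : Type*} [HeytingAlgebra H] (b u₁ u₂ : H) :
    (b ⇨ u₁ᶜ) ⊓ u₂ = u₂ ⊓ (b ⊓ u₁)ᶜ := by
  apply le_antisymm
  · refine le_inf inf_le_right ?_
    rw [le_compl_iff_disjoint_right, disjoint_iff, ← le_bot_iff]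
    calc (b ⇨ u₁ᶜ) ⊓ u₂ ⊓ (b ⊓ u₁) = (((b ⇨ u₁ᶜ) ⊓ b) ⊓ u₁) ⊓ u₂ := by ac_rfl
      _ ≤ ((b ⇨ u₁ᶜ) ⊓ b) ⊓ u₁ := inf_le_left
      _ ≤ u₁ᶜ ⊓ u₁ := inf_le_inf_right u₁ himp_inf_le
      _ = ⊥ := by simp
  · refine le_inf ?_ inf_le_left
    rw [le_himp_iff, le_compl_iff_disjoint_right, disjoint_iff, ← le_bot_iff]
    calc u₂ ⊓ (b ⊓ u₁)ᶜ ⊓ b ⊓ u₁ = ((b ⊓ u₁)ᶜ ⊓ (b ⊓ u₁)) ⊓ u₂ := by ac_rfl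
      _ ≤ (b ⊓ u₁)ᶜ ⊓ (b ⊓ u₁) := inf_le_left
      _ = ⊥ := by simp

/-- The construction `A_u` from a Heyting algebra `H` with fixed `u₁ ≤ u₂` forms a ccpBa:
the set is closed under the operations, the implication is a relative pseudo-complement,
`¬¬∼⊤ = ∼⊤` (where `¬x := x → ⊥`), and `∼x = x → ∼⊤`. -/
theorem Au_forms_ccpBa {H : Type*} [HeytingAlgebra H] (u₁ u₂ : H) (hu : u₁ ≤ u₂)
    (Au : Set (H × H)) (hAu : Au = {a : H × H | a.1 ≤ a.2 ∧ a.2 ≤ u₂ ∧ a.1 = a.2 ⊓ u₁})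
    (imp : H × H → H × H → H × H)
    (himp : ∀ a b : H × H, imp a b = ((a.1 ⇨ b.1) ⊓ u₁, (a.2 ⇨ b.2) ⊓ u₂))
    (snot : H × H → H × H)
    (hsnot : ∀ a : H × H, snot a = (u₁ ⊓ a.1ᶜ, u₂ ⊓ a.1ᶜ)) :
    -- top and bottom belong to `A_u`
    ((u₁, u₂) ∈ Au ∧ ((⊥ : H), (⊥ : H)) ∈ Au) ∧
    -- bounds: every element lies between bottom and top
    (∀ a ∈ Au, ((⊥ : H), (⊥ : H)) ≤ a ∧ a ≤ (u₁, u₂)) ∧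
    -- closure under the operations
    (∀ a ∈ Au, ∀ b ∈ Au, a ⊔ b ∈ Au ∧ a ⊓ b ∈ Au ∧ imp a b ∈ Au) ∧
    (∀ a ∈ Au, snot a ∈ Au) ∧
    -- `imp` is the relative pseudo-complement
    (∀ a ∈ Au, ∀ b ∈ Au, ∀ x ∈ Au, (a ⊓ x ≤ b ↔ x ≤ imp a b)) ∧
    -- `¬¬∼⊤ = ∼⊤`, where `¬x := imp x (⊥,⊥)`
    (imp (imp (snot (u₁, u₂)) (⊥, ⊥)) (⊥, ⊥) = snot (u₁, u₂)) ∧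
    -- `∼x = x → ∼⊤`
    (∀ x ∈ Au, snot x = imp x (snot (u₁, u₂))) := by
  subst hAu
  simp only [Set.mem_setOf_eq]
  have hu21 : u₂ ⊓ u₁ = u₁ := inf_eq_right.mpr hu
  refine ⟨⟨⟨hu, le_rfl, hu21.symm⟩, ⟨le_rfl, bot_le, by simp⟩⟩, ?_, ?_, ?_, ?_, ?_, ?_⟩
  · rintro ⟨a₁, a₂⟩ ⟨h12, h2u, h1e⟩
    dsimp only at h12 h2u h1e
    exact ⟨⟨bot_le, bot_le⟩, ⟨h1e ▸ inf_le_right, h2u⟩⟩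
  · rintro ⟨a₁, a₂⟩ ⟨ha12, ha2u, ha1e⟩ ⟨b₁, b₂⟩ ⟨hb12, hb2u, hb1e⟩
    dsimp only at ha12 ha2u ha1e hb12 hb2u hb1e
    simp only [Prod.fst_sup, Prod.snd_sup, Prod.fst_inf, Prod.snd_inf]
    refine ⟨⟨sup_le_sup ha12 hb12, sup_le ha2u hb2u, ?_⟩,
      ⟨inf_le_inf ha12 hb12, inf_le_right.trans hb2u, ?_⟩, ?_⟩
    · show a₁ ⊔ b₁ = (a₂ ⊔ b₂) ⊓ u₁
      rw [ha1e, hb1e, inf_sup_right]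
    · show a₁ ⊓ b₁ = a₂ ⊓ b₂ ⊓ u₁
      rw [ha1e, hb1e]
      calc a₂ ⊓ u₁ ⊓ (b₂ ⊓ u₁) = (a₂ ⊓ b₂) ⊓ (u₁ ⊓ u₁) := by ac_rfl
        _ = a₂ ⊓ b₂ ⊓ u₁ := by rw [inf_idem]
    · rw [himp]
      have key : (a₁ ⇨ b₁) ⊓ u₁ = (a₂ ⇨ b₂) ⊓ u₁ := by
        rw [ha1e, hb1e, aux_imp]
      refine ⟨?_, inf_le_right, ?_⟩
      · rw [key]; exact inf_le_inf_left _ hu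
      · rw [key, inf_assoc, hu21]
  · rintro ⟨a₁, a₂⟩ ⟨ha12, ha2u, ha1e⟩
    dsimp only at ha12 ha2u ha1e
    rw [hsnot]
    refine ⟨inf_le_inf_right _ hu, inf_le_left, ?_⟩
    show u₁ ⊓ a₁ᶜ = u₂ ⊓ a₁ᶜ ⊓ u₁
    calc u₁ ⊓ a₁ᶜ = (u₂ ⊓ u₁) ⊓ a₁ᶜ := by rw [hu21]
      _ = u₂ ⊓ a₁ᶜ ⊓ u₁ := by ac_rfl
  · rintro ⟨a₁, a₂⟩ ⟨ha12, ha2u, ha1e⟩ ⟨b₁, b₂⟩ ⟨hb12, hb2u, hb1e⟩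
      ⟨x₁, x₂⟩ ⟨hx12, hx2u, hx1e⟩
    dsimp only at ha12 ha2u ha1e hb12 hb2u hb1e hx12 hx2u hx1e
    rw [himp]
    have hx1u : x₁ ≤ u₁ := hx1e ▸ inf_le_right
    constructor
    · rintro ⟨h1, h2⟩
      exact ⟨le_inf (le_himp_iff.mpr (by rwa [inf_comm])) hx1u,
        le_inf (le_himp_iff.mpr (by rwa [inf_comm])) hx2u⟩
    · rintro ⟨h1, h2⟩
      constructor
      · rw [inf_comm]; exact le_himp_iff.mp (h1.trans inf_le_left)
      · rw [inf_comm]; exact le_himp_iff.mp (h2.trans inf_le_left)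
  · rw [hsnot, himp, himp]
    simp only [himp_bot, inf_compl_self, compl_bot, top_inf_eq]
    refine Prod.ext ?_ ?_
    · show u₁ᶜ ⊓ u₁ = ⊥
      rw [inf_comm]; simp
    · exact aux_dn u₁ u₂ hu
  · rintro ⟨x₁, x₂⟩ ⟨hx12, hx2u, hx1e⟩
    dsimp only at hx12 hx2u hx1e
    rw [hsnot, hsnot, himp]
    simp only [inf_compl_self]
    refine Prod.ext ?_ ?_
    · show u₁ ⊓ x₁ᶜ = (x₁ ⇨ ⊥) ⊓ u₁
      rw [himp_bot, inf_comm]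
    · show u₂ ⊓ x₁ᶜ = (x₂ ⇨ u₂ ⊓ u₁ᶜ) ⊓ u₂
      rw [himp_inf_distrib, himp_eq_top_iff.mpr hx2u, top_inf_eq, aux_sn, ← hx1e]
end

section
/- In the construction A_u from a Heyting algebra H with fixed u₁ ≤ u₂: if H is a Boolean algebra, then A_u additionally satisfies x ⊔ ∼x = (u₁,u₂) (the top) for all x ∈ A_u, i.e., A_u is a c∨cpBa. -/
/-- If `H` is a Boolean algebra, then `A_u` additionally satisfies `x ⊔ ∼x = (u₁,u₂)`,
i.e. `A_u` is a c∨cpBa. -/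
theorem Au_cvee_of_boolean {H : Type*} [BooleanAlgebra H] (u₁ u₂ : H) (hu : u₁ ≤ u₂)
    (Au : Set (H × H)) (hAu : Au = {a : H × H | a.1 ≤ a.2 ∧ a.2 ≤ u₂ ∧ a.1 = a.2 ⊓ u₁})
    (snot : H × H → H × H)
    (hsnot : ∀ a : H × H, snot a = (u₁ ⊓ a.1ᶜ, u₂ ⊓ a.1ᶜ)) :
    ∀ x ∈ Au, x ⊔ snot x = (u₁, u₂) := by
  intro x hx
  subst hAu
  obtain ⟨h12, h2u, h1⟩ := hx
  rw [hsnot]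
  have hx1u : x.1 ≤ u₁ := h1 ▸ inf_le_right
  have h2 : x.2 ⊔ (u₂ ⊓ x.1ᶜ) = u₂ := by
    rw [sup_inf_left, sup_eq_right.mpr h2u]
    refine inf_eq_left.mpr ?_
    have key : u₂ ≤ x.1ᶜ ⊔ x.2 := sdiff_le_iff.mp (by
      rw [sdiff_eq, compl_compl]; exact le_trans inf_le_right h12)
    rwa [sup_comm] at key
  have h1' : x.1 ⊔ (u₁ ⊓ x.1ᶜ) = u₁ := by
    rw [sup_inf_left, sup_eq_right.mpr hx1u, sup_compl_eq_top, inf_top_eq]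
  exact Prod.ext h1' h2
end

section
/- There exists a K_im-algebra (A,1,0,∨,∧,¬,∼) such that no binary operation → on A makes (A,1,0,∨,∧,→,¬,∼) a ccpBa. (Witness: L' = (ℤ×ℤ with componentwise order) plus adjoined bottom 0̂ and top 1̂, with ¬0̂ = 1̂, ¬x = 0̂ for all other x, and ∼x = 1̂ for all x; no relative pseudo-complement of (1,0) relative to (0,1) exists.) -/
set_option linter.unnecessarySimpa false


abbrev Kim.A : Type := WithBot (WithTop (ℤ × ℤ))

noncomputable def Kim.neg : Kim.A → Kim.A := fun x => if x = ⊥ then ⊤ else ⊥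

lemma Kim.inf_eq_bot {a b : Kim.A} (h : a ⊓ b = ⊥) : a = ⊥ ∨ b = ⊥ := by
  induction a using WithBot.recBotCoe with
  | bot => exact Or.inl rfl
  | coe a =>
    induction b using WithBot.recBotCoe with
    | bot => exact Or.inr rfl
    | coe b =>
      rw [← WithBot.coe_inf] at h
      exact absurd h (WithBot.coe_ne_bot)

/-- There exists a `K_im`-algebra `(A,1,0,∨,∧,¬,∼)` such that no binary operation `→` on `A`
makes `(A,1,0,∨,∧,→,¬,∼)` a ccpBa. -/
theorem exists_Kim_algebra_not_extendable_to_ccpBa :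
    ∃ (A : Type) (_ : DistribLattice A) (_ : BoundedOrder A) (neg snot : A → A),
      -- `neg` is an intuitionistic negation
      (∀ a b : A, a ≤ b → neg b ≤ neg a) ∧
      (∀ a b : A, neg a ⊓ neg b ≤ neg (a ⊔ b)) ∧
      (neg (⊥ : A) = ⊤) ∧
      (∀ a : A, a ≤ neg (neg a)) ∧
      (∀ a b c : A, a ⊓ b ≤ c → a ⊓ neg c ≤ neg b) ∧
      (∀ a b : A, a ⊓ neg a ≤ b) ∧
      -- `snot` is a minimal negation
      (∀ a b : A, a ≤ b → snot b ≤ snot a) ∧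
      (∀ a b : A, snot a ⊓ snot b ≤ snot (a ⊔ b)) ∧
      (snot (⊥ : A) = ⊤) ∧
      (∀ a : A, a ≤ snot (snot a)) ∧
      (∀ a b c : A, a ⊓ b ≤ c → a ⊓ snot c ≤ snot b) ∧
      -- `¬¬∼1 = ∼1`
      (neg (neg (snot (⊤ : A))) = snot (⊤ : A)) ∧
      -- no implication turns it into a ccpBa
      ¬ ∃ imp : A → A → A,
          (∀ a b x : A, a ⊓ x ≤ b ↔ x ≤ imp a b) ∧
          (∀ a : A, neg a = imp a ⊥) ∧
          (∀ a : A, snot a = imp a (snot ⊤)) := by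
  refine ⟨Kim.A, inferInstance, inferInstance, Kim.neg, fun _ => ⊤, ?_, ?_, ?_, ?_, ?_, ?_,
    ?_, ?_, ?_, ?_, ?_, ?_, ?_⟩
  · intro a b hab
    by_cases hb : b = ⊥
    · subst hb; simp [Kim.neg, le_bot_iff.mp hab]
    · simp [Kim.neg, hb]
  · intro a b
    by_cases ha : a = ⊥ <;> by_cases hb : b = ⊥ <;> simp [Kim.neg, ha, hb]
  · simp [Kim.neg]
  · intro a
    by_cases ha : a = ⊥
    · simp [Kim.neg, ha]
    · simp [Kim.neg, ha]
  · intro a b c h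
    by_cases hc : c = ⊥
    · subst hc
      rcases Kim.inf_eq_bot (le_bot_iff.mp h) with ha | hb
      · simp [Kim.neg, ha]
      · simp [Kim.neg, hb]
    · simp [Kim.neg, hc]
  · intro a b
    by_cases ha : a = ⊥ <;> simp [Kim.neg, ha]
  · intro a b _; exact le_refl _
  · intro a b; exact inf_le_left
  · rfl
  · intro a; exact le_top
  · intro a b c _; exact le_top
  · have : (⊤ : Kim.A) ≠ ⊥ := top_ne_bot
    simp [Kim.neg, this]
  · rintro ⟨imp, himp, -, -⟩
    set a : Kim.A := (((((1:ℤ),(0:ℤ)) : ℤ × ℤ) : WithTop (ℤ × ℤ)) : Kim.A) with ha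
    set b : Kim.A := (((((0:ℤ),(1:ℤ)) : ℤ × ℤ) : WithTop (ℤ × ℤ)) : Kim.A) with hb
    have key : ∀ p q : ℤ, a ⊓ ((((p, q) : ℤ × ℤ) : WithTop (ℤ × ℤ)) : Kim.A) ≤ b ↔ p ⊓ 1 ≤ 0 ∧ q ⊓ 0 ≤ 1 := by
      intro p q
      rw [ha, hb, ← WithBot.coe_inf, ← WithTop.coe_inf, WithBot.coe_le_coe, WithTop.coe_le_coe]
      constructor
      · intro h; exact ⟨by simpa [inf_comm] using h.1, by simpa [inf_comm] using h.2⟩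
      · intro h; exact ⟨by simpa [inf_comm] using h.1, by simpa [inf_comm] using h.2⟩
    obtain ⟨m, hm⟩ : ∃ m, imp a b = m := ⟨_, rfl⟩
    induction m using WithBot.recBotCoe with
    | bot =>
      have h0 : (((((0:ℤ),(0:ℤ)) : ℤ × ℤ) : WithTop (ℤ × ℤ)) : Kim.A) ≤ (⊥ : Kim.A) := by
        rw [← hm]
        exact (himp a b _).mp ((key 0 0).mpr (by norm_num))
      exact absurd (le_bot_iff.mp h0) WithBot.coe_ne_bot
    | coe m' =>
      induction m' using WithTop.recTopCoe with
      | top =>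
        have h1 : a ⊓ (⊤ : Kim.A) ≤ b := (himp a b ⊤).mpr (by rw [hm]; exact le_top)
        rw [inf_top_eq, ha, hb, WithBot.coe_le_coe, WithTop.coe_le_coe] at h1
        exact absurd h1.1 (by norm_num)
      | coe pq =>
        obtain ⟨p, q⟩ := pq
        have h2 : (((((0:ℤ), q + 1) : ℤ × ℤ) : WithTop (ℤ × ℤ)) : Kim.A) ≤ ((((p, q) : ℤ × ℤ) : WithTop (ℤ × ℤ)) : Kim.A) := by
          rw [← hm]
          refine (himp a b _).mp ((key 0 (q+1)).mpr ⟨by norm_num, ?_⟩)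
          exact le_trans inf_le_right (by norm_num)
        rw [WithBot.coe_le_coe, WithTop.coe_le_coe] at h2
        exact absurd h2.2 (by omega)
end

section
/- Let (W,≤,Y₀) be a sub-normal frame with R₂ defined by x R₂ y ⟺ ∃z (x ≤ z ∧ y ≤ z ∧ z ∉ Y₀). If additionally ≤ restricted to W∖Y₀ is symmetric (condition (E): x,y ∉ Y₀ and x ≤ y imply y ≤ x), then R₂ ⊆ ≤⁻¹, i.e., x R₂ y implies y ≤ x. -/
/-- In a sub-normal identity frame (condition (E)), the relation `R₂` satisfies `R₂ ⊆ ≤⁻¹`. -/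
theorem subnormal_identity_R2_subset {W : Type*} [PartialOrder W] (Y₀ : Set W)
    (hup : ∀ x y : W, x ∈ Y₀ → x ≤ y → y ∈ Y₀)
    (hD : ∀ x : W, (∀ y : W, x ≤ y → ∃ z : W, y ≤ z ∧ z ∈ Y₀) → x ∈ Y₀)
    (hE : ∀ x y : W, x ∉ Y₀ → y ∉ Y₀ → x ≤ y → y ≤ x)
    (R₂ : W → W → Prop)
    (hR₂ : ∀ x y : W, R₂ x y ↔ ∃ z : W, x ≤ z ∧ y ≤ z ∧ z ∉ Y₀) :
    ∀ x y : W, R₂ x y → y ≤ x := by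
  intro x y h
  obtain ⟨z, hxz, hyz, hz⟩ := (hR₂ x y).mp h
  have hx : x ∉ Y₀ := fun hx => hz (hup x z hx hxz)
  exact hyz.trans (hE x z hx hz hxz)
end

section
/- Let (W,≤,Y₀) be a sub-normal frame. Let Up(W) be the set of upsets of W, with U → V := {w : ∀v ≥ w, v ∈ U → v ∈ V}, ¬U := U → ∅, ∼U := U → Y₀. Then (Up(W), W, ∅, ∩, ∪, →, ¬, ∼) is a ccpBa: → is the relative pseudo-complement on the lattice of upsets, ¬¬∼W = ∼W (= Y₀ up to the closure given by (D)), and ∼U = U → ∼W for all upsets U. -/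
/-- The complex algebra of upsets of a sub-normal frame `(W,≤,Y₀)` forms a ccpBa:
`→` is the relative pseudo-complement on the lattice of upsets, `¬¬∼W = ∼W`
(with `¬U := U → ∅`, `∼U := U → Y₀`), and `∼U = U → ∼W` for all upsets `U`. -/
theorem subnormal_complex_algebra_ccpBa {W : Type*} [PartialOrder W] (Y₀ : Set W)
    (hup : ∀ x y : W, x ∈ Y₀ → x ≤ y → y ∈ Y₀)
    (hD : ∀ x : W, (∀ y : W, x ≤ y → ∃ z : W, y ≤ z ∧ z ∈ Y₀) → x ∈ Y₀)
    (IsUpset : Set W → Prop) (hIsUpset : ∀ U : Set W, IsUpset U ↔ ∀ x y : W, x ∈ U → x ≤ y → y ∈ U)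
    (imp : Set W → Set W → Set W)
    (himp : ∀ U V : Set W, imp U V = {w : W | ∀ v : W, w ≤ v → v ∈ U → v ∈ V}) :
    -- closure: implication of upsets is an upset
    (∀ U V : Set W, IsUpset U → IsUpset V → IsUpset (imp U V)) ∧
    -- `imp` is the relative pseudo-complement in the lattice of upsets
    (∀ U V X : Set W, IsUpset U → IsUpset V → IsUpset X → (U ∩ X ⊆ V ↔ X ⊆ imp U V)) ∧
    -- `¬¬∼W = ∼W`, where `∼W = W → Y₀` and `¬U = U → ∅`
    (imp (imp (imp Set.univ Y₀) ∅) ∅ = imp Set.univ Y₀) ∧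
    -- `∼U = U → ∼W`
    (∀ U : Set W, IsUpset U → imp U Y₀ = imp U (imp Set.univ Y₀)) := by
  have key : imp Set.univ Y₀ = Y₀ := by
    rw [himp]
    ext w
    constructor
    · intro h; exact h w le_rfl trivial
    · intro hw v hv _; exact hup w v hw hv
  refine ⟨?_, ?_, ?_, ?_⟩
  · intro U V _ _
    rw [hIsUpset, himp]
    intro x y hx hxy v hyv hv
    exact hx v (hxy.trans hyv) hv
  · intro U V X _ _ hX
    rw [himp]
    constructor
    · intro h x hx v hxv hv
      exact h ⟨hv, (hIsUpset X).mp hX x v hx hxv⟩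
    · intro h x ⟨hxU, hxX⟩
      exact h hxX x le_rfl hxU
  · rw [key]
    ext w
    simp only [himp, Set.mem_setOf_eq]
    constructor
    · intro h
      apply hD
      intro y hwy
      by_contra hc
      push_neg at hc
      exact h y hwy (fun v hyv hv => (hc v hyv hv).elim)
    · intro hw v hwv hv
      exact hv v le_rfl (hup w v hw hwv)
  · intro U _
    rw [key]
end
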